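/- For every multiple-access channel W on finite alphabets, the capacity region equals the sum-capacity region: C(W) = C_sum(W). -/

import Mathlib

open Finset Filter Topology

section Defs

variable {X1 X2 Y : Type*}

/-- The `n`-fold memoryless extension `W^{⊗n}` of a multiple-access channel `W`. -/
def macPow (n : ℕ) (W : X1 → X2 → Y → ℝ) :
    (Fin n → X1) → (Fin n → X2) → (Fin n → Y) → ℝ :=
  fun x1 x2 y => ∏ i, W (x1 i) (x2 i) (y i)

/-- `S(W,k1,k2)`: maximum joint success probability over classical (unassisted)
stochastic encoders and decoder. -/
noncomputable def S [Fintype X1] [Fintype X2] [Fintype Y]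
    (W : X1 → X2 → Y → ℝ) (k1 k2 : ℕ) : ℝ :=
  sSup {s : ℝ | ∃ (e1 : Fin k1 → X1 → ℝ) (e2 : Fin k2 → X2 → ℝ)
      (d : Y → Fin k1 → Fin k2 → ℝ),
    (∀ i1 x1, 0 ≤ e1 i1 x1) ∧ (∀ i1, ∑ x1, e1 i1 x1 = 1) ∧
    (∀ i2 x2, 0 ≤ e2 i2 x2) ∧ (∀ i2, ∑ x2, e2 i2 x2 = 1) ∧
    (∀ y j1 j2, 0 ≤ d y j1 j2) ∧ (∀ y, ∑ j1, ∑ j2, d y j1 j2 = 1) ∧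
    s = (1 / ((k1 : ℝ) * (k2 : ℝ))) * ∑ i1, ∑ i2, ∑ x1, ∑ x2, ∑ y,
      W x1 x2 y * e1 i1 x1 * e2 i2 x2 * d y i1 i2}

/-- `S_sum(W,k1,k2)`: maximum sum (averaged individual) success probability over
classical stochastic encoders and a pair of decoders. -/
noncomputable def Ssum [Fintype X1] [Fintype X2] [Fintype Y]
    (W : X1 → X2 → Y → ℝ) (k1 k2 : ℕ) : ℝ :=
  sSup {s : ℝ | ∃ (e1 : Fin k1 → X1 → ℝ) (e2 : Fin k2 → X2 → ℝ)
      (d1 : Y → Fin k1 → ℝ) (d2 : Y → Fin k2 → ℝ),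
    (∀ i1 x1, 0 ≤ e1 i1 x1) ∧ (∀ i1, ∑ x1, e1 i1 x1 = 1) ∧
    (∀ i2 x2, 0 ≤ e2 i2 x2) ∧ (∀ i2, ∑ x2, e2 i2 x2 = 1) ∧
    (∀ y j1, 0 ≤ d1 y j1) ∧ (∀ y, ∑ j1, d1 y j1 = 1) ∧
    (∀ y j2, 0 ≤ d2 y j2) ∧ (∀ y, ∑ j2, d2 y j2 = 1) ∧
    s = (1 / (2 * (k1 : ℝ) * (k2 : ℝ))) * ∑ i1, ∑ i2, ∑ x1, ∑ x2, ∑ y,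
      W x1 x2 y * e1 i1 x1 * e2 i2 x2 * (d1 y i1 + d2 y i2)}

/-- `⌈2^{R n}⌉`, the number of messages at rate `R` for blocklength `n`. -/
noncomputable def nMsg (R : ℝ) (n : ℕ) : ℕ := ⌈(2 : ℝ) ^ (R * (n : ℝ))⌉₊

/-- The capacity region `C(W)`: closure of the set of achievable rate pairs. -/
noncomputable def capacityRegion [Fintype X1] [Fintype X2] [Fintype Y]
    (W : X1 → X2 → Y → ℝ) : Set (ℝ × ℝ) :=
  closure {p : ℝ × ℝ |
    Tendsto (fun n : ℕ => S (macPow n W) (nMsg p.1 n) (nMsg p.2 n)) atTop (𝓝 1)}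

/-- The sum-capacity region `C_sum(W)`: closure of the set of sum-achievable rate pairs. -/
noncomputable def sumCapacityRegion [Fintype X1] [Fintype X2] [Fintype Y]
    (W : X1 → X2 → Y → ℝ) : Set (ℝ × ℝ) :=
  closure {p : ℝ × ℝ |
    Tendsto (fun n : ℕ => Ssum (macPow n W) (nMsg p.1 n) (nMsg p.2 n)) atTop (𝓝 1)}

end Defs

section Aux

variable {X1 X2 Y : Type*} [Fintype X1] [Fintype X2] [Fintype Y]

/-- The set whose supremum is `S`. -/
def Sset (W : X1 → X2 → Y → ℝ) (k1 k2 : ℕ) : Set ℝ :=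
  {s : ℝ | ∃ (e1 : Fin k1 → X1 → ℝ) (e2 : Fin k2 → X2 → ℝ)
      (d : Y → Fin k1 → Fin k2 → ℝ),
    (∀ i1 x1, 0 ≤ e1 i1 x1) ∧ (∀ i1, ∑ x1, e1 i1 x1 = 1) ∧
    (∀ i2 x2, 0 ≤ e2 i2 x2) ∧ (∀ i2, ∑ x2, e2 i2 x2 = 1) ∧
    (∀ y j1 j2, 0 ≤ d y j1 j2) ∧ (∀ y, ∑ j1, ∑ j2, d y j1 j2 = 1) ∧
    s = (1 / ((k1 : ℝ) * (k2 : ℝ))) * ∑ i1, ∑ i2, ∑ x1, ∑ x2, ∑ y,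
      W x1 x2 y * e1 i1 x1 * e2 i2 x2 * d y i1 i2}

/-- The set whose supremum is `Ssum`. -/
def SsumSet (W : X1 → X2 → Y → ℝ) (k1 k2 : ℕ) : Set ℝ :=
  {s : ℝ | ∃ (e1 : Fin k1 → X1 → ℝ) (e2 : Fin k2 → X2 → ℝ)
      (d1 : Y → Fin k1 → ℝ) (d2 : Y → Fin k2 → ℝ),
    (∀ i1 x1, 0 ≤ e1 i1 x1) ∧ (∀ i1, ∑ x1, e1 i1 x1 = 1) ∧
    (∀ i2 x2, 0 ≤ e2 i2 x2) ∧ (∀ i2, ∑ x2, e2 i2 x2 = 1) ∧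
    (∀ y j1, 0 ≤ d1 y j1) ∧ (∀ y, ∑ j1, d1 y j1 = 1) ∧
    (∀ y j2, 0 ≤ d2 y j2) ∧ (∀ y, ∑ j2, d2 y j2 = 1) ∧
    s = (1 / (2 * (k1 : ℝ) * (k2 : ℝ))) * ∑ i1, ∑ i2, ∑ x1, ∑ x2, ∑ y,
      W x1 x2 y * e1 i1 x1 * e2 i2 x2 * (d1 y i1 + d2 y i2)}

lemma S_eq_sSup (W : X1 → X2 → Y → ℝ) (k1 k2 : ℕ) :
    S W k1 k2 = sSup (Sset W k1 k2) := rfl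

lemma Ssum_eq_sSup (W : X1 → X2 → Y → ℝ) (k1 k2 : ℕ) :
    Ssum W k1 k2 = sSup (SsumSet W k1 k2) := rfl

variable {W : X1 → X2 → Y → ℝ} {k1 k2 : ℕ}

lemma half_arith (a b T : ℝ) (ha : a ≠ 0) (hb : b ≠ 0) :
    (1 / (2 * a * b)) * (T + a * b) = ((1 / (a * b)) * T + 1) / 2 := by
  field_simp

/-- Total mass identity. -/
lemma mac_mass (hW1 : ∀ x1 x2, ∑ y, W x1 x2 y = 1)
    (e1 : Fin k1 → X1 → ℝ) (e2 : Fin k2 → X2 → ℝ)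
    (he1 : ∀ i1, ∑ x1, e1 i1 x1 = 1) (he2 : ∀ i2, ∑ x2, e2 i2 x2 = 1) :
    ∑ i1, ∑ i2, ∑ x1, ∑ x2, ∑ y, W x1 x2 y * e1 i1 x1 * e2 i2 x2
      = (k1 : ℝ) * (k2 : ℝ) := by
  have h : ∀ i1 i2, ∑ x1, ∑ x2, ∑ y, W x1 x2 y * e1 i1 x1 * e2 i2 x2 = 1 := by
    intro i1 i2
    have hy : ∀ x1 x2, ∑ y, W x1 x2 y * e1 i1 x1 * e2 i2 x2
        = e1 i1 x1 * e2 i2 x2 := by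
      intro x1 x2
      rw [show (∑ y, W x1 x2 y * e1 i1 x1 * e2 i2 x2)
          = (∑ y, W x1 x2 y) * (e1 i1 x1 * e2 i2 x2) by
        rw [Finset.sum_mul]; exact Finset.sum_congr rfl fun y _ => by ring]
      rw [hW1, one_mul]
    simp only [hy]
    rw [← Fintype.sum_mul_sum, he1, he2, one_mul]
  rw [Finset.sum_congr rfl fun i1 _ => Finset.sum_congr rfl fun i2 _ => h i1 i2]
  simp [mul_comm]

lemma Sset_nonneg (hW0 : ∀ x1 x2 y, 0 ≤ W x1 x2 y) :
    ∀ s ∈ Sset W k1 k2, 0 ≤ s := by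
  rintro s ⟨e1, e2, d, he10, he1s, he20, he2s, hd0, hds, rfl⟩
  refine mul_nonneg (by positivity) ?_
  refine Finset.sum_nonneg fun i1 _ => Finset.sum_nonneg fun i2 _ =>
    Finset.sum_nonneg fun x1 _ => Finset.sum_nonneg fun x2 _ =>
    Finset.sum_nonneg fun y _ => ?_
  exact mul_nonneg (mul_nonneg (mul_nonneg (hW0 _ _ _) (he10 _ _)) (he20 _ _))
    (hd0 _ _ _)

lemma SsumSet_nonneg (hW0 : ∀ x1 x2 y, 0 ≤ W x1 x2 y) :
    ∀ s ∈ SsumSet W k1 k2, 0 ≤ s := by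
  rintro s ⟨e1, e2, d1, d2, he10, he1s, he20, he2s, hd10, hd1s, hd20, hd2s, rfl⟩
  refine mul_nonneg (by positivity) ?_
  refine Finset.sum_nonneg fun i1 _ => Finset.sum_nonneg fun i2 _ =>
    Finset.sum_nonneg fun x1 _ => Finset.sum_nonneg fun x2 _ =>
    Finset.sum_nonneg fun y _ => ?_
  exact mul_nonneg (mul_nonneg (mul_nonneg (hW0 _ _ _) (he10 _ _)) (he20 _ _))
    (add_nonneg (hd10 _ _) (hd20 _ _))

lemma Sset_le_one (hW0 : ∀ x1 x2 y, 0 ≤ W x1 x2 y)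
    (hW1 : ∀ x1 x2, ∑ y, W x1 x2 y = 1) (hk1 : 0 < k1) (hk2 : 0 < k2) :
    ∀ s ∈ Sset W k1 k2, s ≤ 1 := by
  rintro s ⟨e1, e2, d, he10, he1s, he20, he2s, hd0, hds, rfl⟩
  have hT : (∑ i1, ∑ i2, ∑ x1, ∑ x2, ∑ y,
        W x1 x2 y * e1 i1 x1 * e2 i2 x2 * d y i1 i2)
      ≤ ∑ i1, ∑ i2, ∑ x1, ∑ x2, ∑ y, W x1 x2 y * e1 i1 x1 * e2 i2 x2 := by
    refine Finset.sum_le_sum fun i1 _ => Finset.sum_le_sum fun i2 _ =>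
      Finset.sum_le_sum fun x1 _ => Finset.sum_le_sum fun x2 _ =>
      Finset.sum_le_sum fun y _ => ?_
    have hd1 : d y i1 i2 ≤ 1 := by
      calc d y i1 i2 ≤ ∑ j2, d y i1 j2 :=
            Finset.single_le_sum (fun j _ => hd0 y i1 j) (Finset.mem_univ i2)
        _ ≤ ∑ j1, ∑ j2, d y j1 j2 :=
            Finset.single_le_sum
              (fun j _ => Finset.sum_nonneg fun j2 _ => hd0 y j j2)
              (Finset.mem_univ i1)
        _ = 1 := hds y
    exact mul_le_of_le_one_right
      (mul_nonneg (mul_nonneg (hW0 x1 x2 y) (he10 i1 x1)) (he20 i2 x2)) hd1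
  have hx : ((k1 : ℝ) * (k2 : ℝ)) ≠ 0 := by positivity
  calc (1 / ((k1 : ℝ) * (k2 : ℝ))) * ∑ i1, ∑ i2, ∑ x1, ∑ x2, ∑ y,
        W x1 x2 y * e1 i1 x1 * e2 i2 x2 * d y i1 i2
      ≤ (1 / ((k1 : ℝ) * (k2 : ℝ))) * ((k1 : ℝ) * (k2 : ℝ)) := by
        refine mul_le_mul_of_nonneg_left ?_ (by positivity)
        exact hT.trans_eq (mac_mass hW1 e1 e2 he1s he2s)
    _ = 1 := one_div_mul_cancel hx

lemma SsumSet_le_one (hW0 : ∀ x1 x2 y, 0 ≤ W x1 x2 y)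
    (hW1 : ∀ x1 x2, ∑ y, W x1 x2 y = 1) (hk1 : 0 < k1) (hk2 : 0 < k2) :
    ∀ s ∈ SsumSet W k1 k2, s ≤ 1 := by
  rintro s ⟨e1, e2, d1, d2, he10, he1s, he20, he2s, hd10, hd1s, hd20, hd2s, rfl⟩
  have hT : (∑ i1, ∑ i2, ∑ x1, ∑ x2, ∑ y,
        W x1 x2 y * e1 i1 x1 * e2 i2 x2 * (d1 y i1 + d2 y i2))
      ≤ ∑ i1, ∑ i2, ∑ x1, ∑ x2, ∑ y,
        2 * (W x1 x2 y * e1 i1 x1 * e2 i2 x2) := by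
    refine Finset.sum_le_sum fun i1 _ => Finset.sum_le_sum fun i2 _ =>
      Finset.sum_le_sum fun x1 _ => Finset.sum_le_sum fun x2 _ =>
      Finset.sum_le_sum fun y _ => ?_
    have hA : 0 ≤ W x1 x2 y * e1 i1 x1 * e2 i2 x2 :=
      mul_nonneg (mul_nonneg (hW0 x1 x2 y) (he10 i1 x1)) (he20 i2 x2)
    have h1 : d1 y i1 ≤ 1 := by
      calc d1 y i1 ≤ ∑ j1, d1 y j1 :=
            Finset.single_le_sum (fun j _ => hd10 y j) (Finset.mem_univ i1)
        _ = 1 := hd1s y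
    have h2 : d2 y i2 ≤ 1 := by
      calc d2 y i2 ≤ ∑ j2, d2 y j2 :=
            Finset.single_le_sum (fun j _ => hd20 y j) (Finset.mem_univ i2)
        _ = 1 := hd2s y
    nlinarith [mul_nonneg hA (by linarith : (0:ℝ) ≤ 2 - (d1 y i1 + d2 y i2))]
  have hT2 : (∑ i1, ∑ i2, ∑ x1, ∑ x2, ∑ y,
        2 * (W x1 x2 y * e1 i1 x1 * e2 i2 x2)) = 2 * ((k1 : ℝ) * (k2 : ℝ)) := by
    simp only [← Finset.mul_sum]
    rw [mac_mass hW1 e1 e2 he1s he2s]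
  have hk1' : ((k1 : ℝ)) ≠ 0 := by positivity
  have hk2' : ((k2 : ℝ)) ≠ 0 := by positivity
  calc (1 / (2 * (k1 : ℝ) * (k2 : ℝ))) * ∑ i1, ∑ i2, ∑ x1, ∑ x2, ∑ y,
        W x1 x2 y * e1 i1 x1 * e2 i2 x2 * (d1 y i1 + d2 y i2)
      ≤ (1 / (2 * (k1 : ℝ) * (k2 : ℝ))) * (2 * ((k1 : ℝ) * (k2 : ℝ))) := by
        exact mul_le_mul_of_nonneg_left (hT.trans_eq hT2) (by positivity)
    _ = 1 := by field_simp

lemma bddAbove_Sset (hW0 : ∀ x1 x2 y, 0 ≤ W x1 x2 y)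
    (hW1 : ∀ x1 x2, ∑ y, W x1 x2 y = 1) (hk1 : 0 < k1) (hk2 : 0 < k2) :
    BddAbove (Sset W k1 k2) :=
  ⟨1, fun _ hs => Sset_le_one hW0 hW1 hk1 hk2 _ hs⟩

lemma bddAbove_SsumSet (hW0 : ∀ x1 x2 y, 0 ≤ W x1 x2 y)
    (hW1 : ∀ x1 x2, ∑ y, W x1 x2 y = 1) (hk1 : 0 < k1) (hk2 : 0 < k2) :
    BddAbove (SsumSet W k1 k2) :=
  ⟨1, fun _ hs => SsumSet_le_one hW0 hW1 hk1 hk2 _ hs⟩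

lemma S_le_one (hW0 : ∀ x1 x2 y, 0 ≤ W x1 x2 y)
    (hW1 : ∀ x1 x2, ∑ y, W x1 x2 y = 1) (hk1 : 0 < k1) (hk2 : 0 < k2) :
    S W k1 k2 ≤ 1 := by
  rw [S_eq_sSup]
  exact Real.sSup_le (Sset_le_one hW0 hW1 hk1 hk2) zero_le_one

lemma Ssum_le_one (hW0 : ∀ x1 x2 y, 0 ≤ W x1 x2 y)
    (hW1 : ∀ x1 x2, ∑ y, W x1 x2 y = 1) (hk1 : 0 < k1) (hk2 : 0 < k2) :
    Ssum W k1 k2 ≤ 1 := by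
  rw [Ssum_eq_sSup]
  exact Real.sSup_le (SsumSet_le_one hW0 hW1 hk1 hk2) zero_le_one

lemma S_nonneg (hW0 : ∀ x1 x2 y, 0 ≤ W x1 x2 y) : 0 ≤ S W k1 k2 := by
  rw [S_eq_sSup]; exact Real.sSup_nonneg (Sset_nonneg hW0)

lemma Ssum_nonneg (hW0 : ∀ x1 x2 y, 0 ≤ W x1 x2 y) : 0 ≤ Ssum W k1 k2 := by
  rw [Ssum_eq_sSup]; exact Real.sSup_nonneg (SsumSet_nonneg hW0)

/-- Joint success is at most the averaged individual success. -/
lemma S_le_Ssum (hW0 : ∀ x1 x2 y, 0 ≤ W x1 x2 y)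
    (hW1 : ∀ x1 x2, ∑ y, W x1 x2 y = 1) (hk1 : 0 < k1) (hk2 : 0 < k2) :
    S W k1 k2 ≤ Ssum W k1 k2 := by
  rw [S_eq_sSup]
  refine Real.sSup_le ?_ (Ssum_nonneg hW0)
  rintro s ⟨e1, e2, d, he10, he1s, he20, he2s, hd0, hds, rfl⟩
  set D1 : Y → Fin k1 → ℝ := fun y j1 => ∑ j2, d y j1 j2 with hD1
  set D2 : Y → Fin k2 → ℝ := fun y j2 => ∑ j1, d y j1 j2 with hD2
  have hmem : (1 / (2 * (k1 : ℝ) * (k2 : ℝ))) * (∑ i1, ∑ i2, ∑ x1, ∑ x2, ∑ y,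
      W x1 x2 y * e1 i1 x1 * e2 i2 x2 * (D1 y i1 + D2 y i2)) ∈ SsumSet W k1 k2 := by
    refine ⟨e1, e2, D1, D2, he10, he1s, he20, he2s,
      fun y j1 => Finset.sum_nonneg fun j2 _ => hd0 y j1 j2,
      fun y => hds y,
      fun y j2 => Finset.sum_nonneg fun j1 _ => hd0 y j1 j2,
      fun y => ?_, rfl⟩
    rw [show (∑ j2, D2 y j2) = ∑ j2, ∑ j1, d y j1 j2 from rfl, Finset.sum_comm]
    exact hds y
  have hle : (1 / ((k1 : ℝ) * (k2 : ℝ))) * (∑ i1, ∑ i2, ∑ x1, ∑ x2, ∑ y,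
        W x1 x2 y * e1 i1 x1 * e2 i2 x2 * d y i1 i2)
      ≤ (1 / (2 * (k1 : ℝ) * (k2 : ℝ))) * (∑ i1, ∑ i2, ∑ x1, ∑ x2, ∑ y,
        W x1 x2 y * e1 i1 x1 * e2 i2 x2 * (D1 y i1 + D2 y i2)) := by
    have hterm : (∑ i1, ∑ i2, ∑ x1, ∑ x2, ∑ y,
          2 * (W x1 x2 y * e1 i1 x1 * e2 i2 x2 * d y i1 i2))
        ≤ ∑ i1, ∑ i2, ∑ x1, ∑ x2, ∑ y,
          W x1 x2 y * e1 i1 x1 * e2 i2 x2 * (D1 y i1 + D2 y i2) := by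
      refine Finset.sum_le_sum fun i1 _ => Finset.sum_le_sum fun i2 _ =>
        Finset.sum_le_sum fun x1 _ => Finset.sum_le_sum fun x2 _ =>
        Finset.sum_le_sum fun y _ => ?_
      have hA : 0 ≤ W x1 x2 y * e1 i1 x1 * e2 i2 x2 :=
        mul_nonneg (mul_nonneg (hW0 x1 x2 y) (he10 i1 x1)) (he20 i2 x2)
      have hb1 : d y i1 i2 ≤ D1 y i1 :=
        Finset.single_le_sum (fun j _ => hd0 y i1 j) (Finset.mem_univ i2)
      have hb2 : d y i1 i2 ≤ D2 y i2 :=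
        Finset.single_le_sum (fun j _ => hd0 y j i2) (Finset.mem_univ i1)
      nlinarith [mul_nonneg hA (by linarith :
        (0:ℝ) ≤ (D1 y i1 + D2 y i2) - 2 * d y i1 i2)]
    have h2T : (∑ i1, ∑ i2, ∑ x1, ∑ x2, ∑ y,
          2 * (W x1 x2 y * e1 i1 x1 * e2 i2 x2 * d y i1 i2))
        = 2 * ∑ i1, ∑ i2, ∑ x1, ∑ x2, ∑ y,
          W x1 x2 y * e1 i1 x1 * e2 i2 x2 * d y i1 i2 := by
      simp only [← Finset.mul_sum]
    have hk1' : ((k1 : ℝ)) ≠ 0 := by positivity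
    have hk2' : ((k2 : ℝ)) ≠ 0 := by positivity
    have hrw : (1 / ((k1 : ℝ) * (k2 : ℝ))) * (∑ i1, ∑ i2, ∑ x1, ∑ x2, ∑ y,
          W x1 x2 y * e1 i1 x1 * e2 i2 x2 * d y i1 i2)
        = (1 / (2 * (k1 : ℝ) * (k2 : ℝ))) * (2 * ∑ i1, ∑ i2, ∑ x1, ∑ x2, ∑ y,
          W x1 x2 y * e1 i1 x1 * e2 i2 x2 * d y i1 i2) := by
      field_simp
    rw [hrw, ← h2T]
    exact mul_le_mul_of_nonneg_left hterm (by positivity)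
  rw [Ssum_eq_sSup]
  exact hle.trans (le_csSup (bddAbove_SsumSet hW0 hW1 hk1 hk2) hmem)

/-- Averaged individual success is at most `(S + 1)/2`. -/
lemma Ssum_le_half (hW0 : ∀ x1 x2 y, 0 ≤ W x1 x2 y)
    (hW1 : ∀ x1 x2, ∑ y, W x1 x2 y = 1) (hk1 : 0 < k1) (hk2 : 0 < k2) :
    Ssum W k1 k2 ≤ (S W k1 k2 + 1) / 2 := by
  rw [Ssum_eq_sSup]
  refine Real.sSup_le ?_ (by have := S_nonneg (W := W) (k1 := k1) (k2 := k2) hW0; linarith)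
  rintro t ⟨e1, e2, d1, d2, he10, he1s, he20, he2s, hd10, hd1s, hd20, hd2s, rfl⟩
  have hmem : (1 / ((k1 : ℝ) * (k2 : ℝ))) * (∑ i1, ∑ i2, ∑ x1, ∑ x2, ∑ y,
      W x1 x2 y * e1 i1 x1 * e2 i2 x2 * (d1 y i1 * d2 y i2)) ∈ Sset W k1 k2 := by
    refine ⟨e1, e2, fun y j1 j2 => d1 y j1 * d2 y j2, he10, he1s, he20, he2s,
      fun y j1 j2 => mul_nonneg (hd10 y j1) (hd20 y j2), fun y => ?_, rfl⟩
    rw [← Fintype.sum_mul_sum, hd1s, hd2s, one_mul]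
  have hsle : (1 / ((k1 : ℝ) * (k2 : ℝ))) * (∑ i1, ∑ i2, ∑ x1, ∑ x2, ∑ y,
      W x1 x2 y * e1 i1 x1 * e2 i2 x2 * (d1 y i1 * d2 y i2)) ≤ S W k1 k2 := by
    rw [S_eq_sSup]
    exact le_csSup (bddAbove_Sset hW0 hW1 hk1 hk2) hmem
  have hT : (∑ i1, ∑ i2, ∑ x1, ∑ x2, ∑ y,
        W x1 x2 y * e1 i1 x1 * e2 i2 x2 * (d1 y i1 + d2 y i2))
      ≤ (∑ i1, ∑ i2, ∑ x1, ∑ x2, ∑ y,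
        (W x1 x2 y * e1 i1 x1 * e2 i2 x2 * (d1 y i1 * d2 y i2)
          + W x1 x2 y * e1 i1 x1 * e2 i2 x2)) := by
    refine Finset.sum_le_sum fun i1 _ => Finset.sum_le_sum fun i2 _ =>
      Finset.sum_le_sum fun x1 _ => Finset.sum_le_sum fun x2 _ =>
      Finset.sum_le_sum fun y _ => ?_
    have hA : 0 ≤ W x1 x2 y * e1 i1 x1 * e2 i2 x2 :=
      mul_nonneg (mul_nonneg (hW0 x1 x2 y) (he10 i1 x1)) (he20 i2 x2)
    have h1 : d1 y i1 ≤ 1 := by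
      calc d1 y i1 ≤ ∑ j1, d1 y j1 :=
            Finset.single_le_sum (fun j _ => hd10 y j) (Finset.mem_univ i1)
        _ = 1 := hd1s y
    have h2 : d2 y i2 ≤ 1 := by
      calc d2 y i2 ≤ ∑ j2, d2 y j2 :=
            Finset.single_le_sum (fun j _ => hd20 y j) (Finset.mem_univ i2)
        _ = 1 := hd2s y
    nlinarith [mul_nonneg hA (mul_nonneg (by linarith : (0:ℝ) ≤ 1 - d1 y i1)
      (by linarith : (0:ℝ) ≤ 1 - d2 y i2))]
  have hsplit : (∑ i1, ∑ i2, ∑ x1, ∑ x2, ∑ y,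
        (W x1 x2 y * e1 i1 x1 * e2 i2 x2 * (d1 y i1 * d2 y i2)
          + W x1 x2 y * e1 i1 x1 * e2 i2 x2))
      = (∑ i1, ∑ i2, ∑ x1, ∑ x2, ∑ y,
          W x1 x2 y * e1 i1 x1 * e2 i2 x2 * (d1 y i1 * d2 y i2))
        + (k1 : ℝ) * (k2 : ℝ) := by
    simp only [Finset.sum_add_distrib]
    rw [mac_mass hW1 e1 e2 he1s he2s]
  have hk1' : ((k1 : ℝ)) ≠ 0 := by positivity
  have hk2' : ((k2 : ℝ)) ≠ 0 := by positivity
  have harith : (1 / (2 * (k1 : ℝ) * (k2 : ℝ))) *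
        ((∑ i1, ∑ i2, ∑ x1, ∑ x2, ∑ y,
          W x1 x2 y * e1 i1 x1 * e2 i2 x2 * (d1 y i1 * d2 y i2))
          + (k1 : ℝ) * (k2 : ℝ))
      = ((1 / ((k1 : ℝ) * (k2 : ℝ))) * (∑ i1, ∑ i2, ∑ x1, ∑ x2, ∑ y,
          W x1 x2 y * e1 i1 x1 * e2 i2 x2 * (d1 y i1 * d2 y i2)) + 1) / 2 :=
    half_arith _ _ _ hk1' hk2'
  calc (1 / (2 * (k1 : ℝ) * (k2 : ℝ))) * ∑ i1, ∑ i2, ∑ x1, ∑ x2, ∑ y,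
        W x1 x2 y * e1 i1 x1 * e2 i2 x2 * (d1 y i1 + d2 y i2)
      ≤ (1 / (2 * (k1 : ℝ) * (k2 : ℝ))) *
        ((∑ i1, ∑ i2, ∑ x1, ∑ x2, ∑ y,
          W x1 x2 y * e1 i1 x1 * e2 i2 x2 * (d1 y i1 * d2 y i2))
          + (k1 : ℝ) * (k2 : ℝ)) := by
        exact mul_le_mul_of_nonneg_left (hT.trans_eq hsplit) (by positivity)
    _ = ((1 / ((k1 : ℝ) * (k2 : ℝ))) * (∑ i1, ∑ i2, ∑ x1, ∑ x2, ∑ y,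
          W x1 x2 y * e1 i1 x1 * e2 i2 x2 * (d1 y i1 * d2 y i2)) + 1) / 2 := harith
    _ ≤ (S W k1 k2 + 1) / 2 := by linarith

lemma macPow_nonneg (hW0 : ∀ x1 x2 y, 0 ≤ W x1 x2 y) (n : ℕ) :
    ∀ a b y, 0 ≤ macPow n W a b y :=
  fun _ _ _ => Finset.prod_nonneg fun _ _ => hW0 _ _ _

lemma macPow_sum_one (hW1 : ∀ x1 x2, ∑ y, W x1 x2 y = 1) (n : ℕ) :
    ∀ a b, ∑ y, macPow n W a b y = 1 := by
  intro a b
  unfold macPow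
  rw [← Fintype.prod_sum (fun i c => W (a i) (b i) c)]
  simp [hW1]

lemma nMsg_pos (R : ℝ) (n : ℕ) : 0 < nMsg R n :=
  Nat.ceil_pos.mpr (by positivity)

end Aux

/-- For every multiple-access channel `W` on finite alphabets, the capacity region
equals the sum-capacity region: `C(W) = C_sum(W)`. -/
theorem capacityRegion_eq_sumCapacityRegion {X1 X2 Y : Type*}
    [Fintype X1] [Fintype X2] [Fintype Y]
    (W : X1 → X2 → Y → ℝ)
    (hW0 : ∀ x1 x2 y, 0 ≤ W x1 x2 y)
    (hW1 : ∀ x1 x2, ∑ y, W x1 x2 y = 1) :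
    capacityRegion W = sumCapacityRegion W := by
  have hset : {p : ℝ × ℝ |
        Tendsto (fun n : ℕ => S (macPow n W) (nMsg p.1 n) (nMsg p.2 n)) atTop (𝓝 1)}
      = {p : ℝ × ℝ |
        Tendsto (fun n : ℕ => Ssum (macPow n W) (nMsg p.1 n) (nMsg p.2 n)) atTop (𝓝 1)} := by
    ext p
    simp only [Set.mem_setOf_eq]
    have h0 : ∀ n : ℕ, ∀ a b y, 0 ≤ macPow n W a b y := fun n => macPow_nonneg hW0 n
    have h1 : ∀ n : ℕ, ∀ a b, ∑ y, macPow n W a b y = 1 := fun n => macPow_sum_one hW1 n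
    have hfg : ∀ n : ℕ, S (macPow n W) (nMsg p.1 n) (nMsg p.2 n)
        ≤ Ssum (macPow n W) (nMsg p.1 n) (nMsg p.2 n) :=
      fun n => S_le_Ssum (h0 n) (h1 n) (nMsg_pos _ _) (nMsg_pos _ _)
    have hg1 : ∀ n : ℕ, Ssum (macPow n W) (nMsg p.1 n) (nMsg p.2 n) ≤ 1 :=
      fun n => Ssum_le_one (h0 n) (h1 n) (nMsg_pos _ _) (nMsg_pos _ _)
    have hf1 : ∀ n : ℕ, S (macPow n W) (nMsg p.1 n) (nMsg p.2 n) ≤ 1 :=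
      fun n => S_le_one (h0 n) (h1 n) (nMsg_pos _ _) (nMsg_pos _ _)
    have hhalf : ∀ n : ℕ, Ssum (macPow n W) (nMsg p.1 n) (nMsg p.2 n)
        ≤ (S (macPow n W) (nMsg p.1 n) (nMsg p.2 n) + 1) / 2 :=
      fun n => Ssum_le_half (h0 n) (h1 n) (nMsg_pos _ _) (nMsg_pos _ _)
    constructor
    · intro hf
      exact tendsto_of_tendsto_of_tendsto_of_le_of_le hf tendsto_const_nhds hfg hg1
    · intro hg
      have hlow : Tendsto (fun n : ℕ =>
          2 * Ssum (macPow n W) (nMsg p.1 n) (nMsg p.2 n) - 1) atTop (𝓝 1) := by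
        have h := (hg.const_mul 2).sub_const 1
        norm_num at h
        exact h
      refine tendsto_of_tendsto_of_tendsto_of_le_of_le hlow tendsto_const_nhds
        (fun n => ?_) hf1
      have := hhalf n
      linarith
  unfold capacityRegion sumCapacityRegion
  rw [hset]
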